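/- Let G be a group and C a conjugation-closed subset of G. Then the subgroup of the permutation group of C generated by the left translations { L_c | c ∈ C } acts transitively on C if and only if C is a single conjugacy class of ⟨C⟩, i.e., there exists e ∈ C such that C = { h * e * h⁻¹ | h ∈ ⟨C⟩ }. -/

import Mathlib

/-- A subset `C` of a group `G` is conjugation-closed if it is nonempty and closed
under conjugation by elements of the subgroup generated by `C`. -/
def ConjClosed {G : Type*} [Group G] (C : Set G) : Prop :=
  C.Nonempty ∧ ∀ x ∈ C, ∀ h ∈ Subgroup.closure C, h * x * h⁻¹ ∈ C

/-- The left translation `L_c : x ↦ c * x * c⁻¹` of a conjugation-closed subset. -/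
def leftTrans {G : Type*} [Group G] {C : Set G} (hC : ConjClosed C) (c : C) :
    Equiv.Perm C where
  toFun x := ⟨c * x * (c : G)⁻¹, hC.2 x x.2 c (Subgroup.subset_closure c.2)⟩
  invFun x := ⟨(c : G)⁻¹ * x * c, by
    have := hC.2 x x.2 (c : G)⁻¹ (inv_mem (Subgroup.subset_closure c.2))
    simpa using this⟩
  left_inv x := Subtype.ext (by group)
  right_inv x := Subtype.ext (by group)

/-- Every element of the group generated by left translations acts by conjugation by
an element of `⟨C⟩`. -/
lemma leftTrans_closure_conj {G : Type*} [Group G] {C : Set G} (hC : ConjClosed C)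
    {π : Equiv.Perm C} (hπ : π ∈ Subgroup.closure (Set.range (leftTrans hC))) :
    ∃ h ∈ Subgroup.closure C, ∀ x : C, (π x : G) = h * x * h⁻¹ := by
  induction hπ using Subgroup.closure_induction with
  | mem π hπ =>
    obtain ⟨c, rfl⟩ := hπ
    exact ⟨c, Subgroup.subset_closure c.2, fun x => rfl⟩
  | one => exact ⟨1, one_mem _, fun x => by simp⟩
  | mul π σ _ _ hπ hσ =>
    obtain ⟨h, hh, hπ⟩ := hπ
    obtain ⟨k, hk, hσ⟩ := hσ
    refine ⟨h * k, mul_mem hh hk, fun x => ?_⟩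
    simp only [Equiv.Perm.mul_apply, hπ, hσ]
    group
  | inv π _ hπ =>
    obtain ⟨h, hh, hπ⟩ := hπ
    refine ⟨h⁻¹, inv_mem hh, fun x => ?_⟩
    have := hπ (π⁻¹ x)
    rw [show π (π⁻¹ x) = x from Equiv.apply_symm_apply π x] at this
    rw [this]
    group

/-- Conjugation by any element of `⟨C⟩` is realized by some element of the group
generated by left translations. -/
lemma conj_mem_leftTrans_closure {G : Type*} [Group G] {C : Set G} (hC : ConjClosed C)
    {h : G} (hh : h ∈ Subgroup.closure C) :
    ∃ π ∈ Subgroup.closure (Set.range (leftTrans hC)), ∀ x : C, (π x : G) = h * x * h⁻¹ := by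
  induction hh using Subgroup.closure_induction with
  | mem c hc =>
    exact ⟨leftTrans hC ⟨c, hc⟩, Subgroup.subset_closure ⟨⟨c, hc⟩, rfl⟩, fun x => rfl⟩
  | one => exact ⟨1, one_mem _, fun x => by simp⟩
  | mul h k _ _ ih ik =>
    obtain ⟨π, hπ, hπ'⟩ := ih
    obtain ⟨σ, hσ, hσ'⟩ := ik
    refine ⟨π * σ, mul_mem hπ hσ, fun x => ?_⟩
    simp only [Equiv.Perm.mul_apply, hπ', hσ']
    group
  | inv h _ ih =>
    obtain ⟨π, hπ, hπ'⟩ := ih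
    refine ⟨π⁻¹, inv_mem hπ, fun x => ?_⟩
    have := hπ' (π⁻¹ x)
    rw [show π (π⁻¹ x) = x from Equiv.apply_symm_apply π x] at this
    have : ((π⁻¹ x : C) : G) = h⁻¹ * x * h := by
      rw [this]; group
    rw [this]; group

/-- The conjugation quandle on a conjugation-closed subset `C` is connected (the group
generated by the left translations acts transitively on `C`) iff `C` is a single
conjugacy class of the subgroup `⟨C⟩`. -/
theorem conjugation_quandle_connected_iff {G : Type*} [Group G] {C : Set G}
    (hC : ConjClosed C) :
    (∀ a b : C, ∃ π ∈ Subgroup.closure (Set.range (leftTrans hC)), π a = b) ↔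
      ∃ e ∈ C, C = {x : G | ∃ h ∈ Subgroup.closure C, h * e * h⁻¹ = x} := by
  constructor
  · intro htrans
    obtain ⟨e, he⟩ := hC.1
    refine ⟨e, he, Set.Subset.antisymm ?_ ?_⟩
    · intro x hx
      obtain ⟨π, hπ, hπe⟩ := htrans ⟨e, he⟩ ⟨x, hx⟩
      obtain ⟨h, hh, hconj⟩ := leftTrans_closure_conj hC hπ
      refine ⟨h, hh, ?_⟩
      have := hconj ⟨e, he⟩
      rw [hπe] at this
      exact this.symm
    · rintro x ⟨h, hh, rfl⟩
      exact hC.2 e he h hh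
  · rintro ⟨e, he, hCeq⟩ a b
    obtain ⟨ha, hha, haeq⟩ := hCeq.subset a.2
    obtain ⟨hb, hhb, hbeq⟩ := hCeq.subset b.2
    obtain ⟨π, hπ, hπ'⟩ := conj_mem_leftTrans_closure hC (mul_mem hhb (inv_mem hha))
    refine ⟨π, hπ, Subtype.ext ?_⟩
    rw [hπ' a, ← haeq, ← hbeq]
    group
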